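/- Let U ∈ R^{n×m} have distinct unit columns positively spanning R^n and let b^{(j)} → b in R^m_{≥0} with vol(P(U,b)) > 0. Then the cone-volume vectors converge: γ(U, b^{(j)}) → γ(U, b), where γ(U,c)_i = (c_i/n)·vol_{n-1}(P(U,c) ∩ {x : ⟨u_i, x⟩ = c_i}). -/

import Mathlib

open MeasureTheory Filter
open scoped RealInnerProductSpace Topology

noncomputable section

def polyhedron {n m : ℕ} (U : Fin m → EuclideanSpace ℝ (Fin n)) (b : Fin m → ℝ) :
    Set (EuclideanSpace ℝ (Fin n)) :=
  {x | ∀ i, ⟪U i, x⟫ ≤ b i}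

def coneVol {n m : ℕ} (U : Fin m → EuclideanSpace ℝ (Fin n)) (b : Fin m → ℝ) :
    Fin m → ℝ := fun i =>
  b i / n * (μH[(n : ℝ) - 1] (polyhedron U b ∩ {x | ⟪U i, x⟫ = b i})).toReal

def PosSpanning {n m : ℕ} (U : Fin m → EuclideanSpace ℝ (Fin n)) : Prop :=
  ∀ x : EuclideanSpace ℝ (Fin n),
    ∃ c : Fin m → ℝ, (∀ i, 0 ≤ c i) ∧ x = ∑ i, c i • U i


section Core

variable {N mm : ℕ}

lemma poly_isClosed (w : Fin mm → EuclideanSpace ℝ (Fin N)) (d : Fin mm → ℝ) :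
    IsClosed (polyhedron w d) := by
  have : polyhedron w d = ⋂ k, {y : EuclideanSpace ℝ (Fin N) | ⟪w k, y⟫ ≤ d k} := by
    ext y; simp [polyhedron, Set.mem_iInter]
  rw [this]
  exact isClosed_iInter fun k =>
    isClosed_le (Continuous.inner continuous_const continuous_id) continuous_const

lemma poly_isBounded (w : Fin mm → EuclideanSpace ℝ (Fin N)) (hspan : PosSpanning w)
    (d : Fin mm → ℝ) : Bornology.IsBounded (polyhedron w d) := by
  have hdir : ∀ x : EuclideanSpace ℝ (Fin N), ∃ B : ℝ, ∀ y ∈ polyhedron w d, ⟪x, y⟫ ≤ B := by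
    intro x
    obtain ⟨c, hc, hx⟩ := hspan x
    refine ⟨∑ k, c k * d k, fun y hy => ?_⟩
    rw [hx, sum_inner]
    refine Finset.sum_le_sum fun k _ => ?_
    rw [real_inner_smul_left]
    exact mul_le_mul_of_nonneg_left (hy k) (hc k)
  -- coordinatewise bounds
  choose Bp hBp using fun t : Fin N => hdir (EuclideanSpace.single t 1)
  choose Bm hBm using fun t : Fin N => hdir (-EuclideanSpace.single t 1)
  rw [isBounded_iff_forall_norm_le]
  refine ⟨Real.sqrt (∑ t, (|Bp t| + |Bm t|) ^ 2), fun y hy => ?_⟩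
  rw [EuclideanSpace.norm_eq]
  apply Real.sqrt_le_sqrt
  apply Finset.sum_le_sum
  intro t _
  have h1 : y t ≤ Bp t := by
    have := hBp t y hy
    rwa [EuclideanSpace.inner_single_left, map_one, one_mul] at this
  have h2 : -(y t) ≤ Bm t := by
    have := hBm t y hy
    rwa [inner_neg_left, EuclideanSpace.inner_single_left, map_one, one_mul] at this
  have habs : |y t| ≤ |Bp t| + |Bm t| := by
    rw [abs_le]
    constructor
    · nlinarith [le_abs_self (Bm t), abs_nonneg (Bp t)]
    · nlinarith [le_abs_self (Bp t), abs_nonneg (Bm t)]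
  calc ‖y t‖ ^ 2 = |y t| ^ 2 := by rw [Real.norm_eq_abs]
    _ ≤ (|Bp t| + |Bm t|) ^ 2 := pow_le_pow_left₀ (abs_nonneg _) habs 2

lemma poly_isCompact (w : Fin mm → EuclideanSpace ℝ (Fin N)) (hspan : PosSpanning w)
    (d : Fin mm → ℝ) : IsCompact (polyhedron w d) :=
  Metric.isCompact_of_isClosed_isBounded (poly_isClosed w d) (poly_isBounded w hspan d)

lemma hyperplane_null (μ : Measure (EuclideanSpace ℝ (Fin N))) [μ.IsAddHaarMeasure]
    {w : EuclideanSpace ℝ (Fin N)} (hw : w ≠ 0) (d : ℝ) :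
    μ {y : EuclideanSpace ℝ (Fin N) | ⟪w, y⟫ = d} = 0 := by
  set y0 : EuclideanSpace ℝ (Fin N) := (d / ‖w‖ ^ 2) • w with hy0
  have hwy0 : ⟪w, y0⟫ = d := by
    rw [hy0, real_inner_smul_right, real_inner_self_eq_norm_sq]
    field_simp [norm_ne_zero_iff.2 hw]
  set f : EuclideanSpace ℝ (Fin N) →ₗ[ℝ] ℝ :=
    { toFun := fun y => ⟪w, y⟫, map_add' := fun a b => inner_add_right _ _ _,
      map_smul' := fun a b => real_inner_smul_right _ _ _ }
  set s : AffineSubspace ℝ (EuclideanSpace ℝ (Fin N)) := AffineSubspace.mk' y0 (LinearMap.ker f)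
  have hset : {y : EuclideanSpace ℝ (Fin N) | ⟪w, y⟫ = d} = (s : Set _) := by
    ext y
    simp only [Set.mem_setOf_eq, s, AffineSubspace.mem_coe, AffineSubspace.mem_mk',
      LinearMap.mem_ker]
    constructor
    · intro h
      show f (y -ᵥ y0) = 0
      simp only [f, LinearMap.coe_mk, AddHom.coe_mk, vsub_eq_sub, inner_sub_right, h, hwy0,
        sub_self]
    · intro h
      have : f (y -ᵥ y0) = 0 := h
      simp only [f, LinearMap.coe_mk, AddHom.coe_mk, vsub_eq_sub, inner_sub_right, hwy0,
        sub_eq_zero] at this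
      exact this
  rw [hset]
  apply Measure.addHaar_affineSubspace
  intro htop
  have : w ∈ LinearMap.ker f := by
    have : s.direction = ⊤ := by rw [htop]; exact AffineSubspace.direction_top ℝ _ _
    rw [AffineSubspace.direction_mk'] at this
    rw [this]; trivial
  have : ⟪w, w⟫ = 0 := this
  rw [real_inner_self_eq_norm_sq] at this
  exact hw (by simpa [norm_eq_zero, pow_eq_zero_iff] using norm_eq_zero.mp (by nlinarith [norm_nonneg w]))

end Core

section Core2
variable {N mm : ℕ}

lemma core_tendsto (μ : Measure (EuclideanSpace ℝ (Fin N))) [μ.IsAddHaarMeasure]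
    (w : Fin mm → EuclideanSpace ℝ (Fin N)) (hspan : PosSpanning w)
    (dseq : ℕ → Fin mm → ℝ) (d : Fin mm → ℝ)
    (hd : Tendsto dseq atTop (𝓝 d))
    (h0 : ∀ k, w k = 0 → 0 ≤ d k ∧ ∀ j, 0 ≤ dseq j k) :
    Tendsto (fun j => (μ (polyhedron w (dseq j))).toReal) atTop
      (𝓝 ((μ (polyhedron w d)).toReal)) := by
  classical
  set χ : Fin mm → ℝ := fun k => if w k = 0 then 0 else 1 with hχ
  have hχ0 : ∀ k, 0 ≤ χ k := fun k => by by_cases h : w k = 0 <;> simp [hχ, h]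
  have hχ1 : ∀ k, χ k ≤ 1 := fun k => by by_cases h : w k = 0 <;> simp [hχ, h]
  set A : ℝ → Set (EuclideanSpace ℝ (Fin N)) :=
    fun ε => polyhedron w (fun k => d k + ε * χ k) with hA
  have hA_mono : ∀ {ε ε' : ℝ}, ε ≤ ε' → A ε ⊆ A ε' := by
    intro ε ε' h y hy k
    refine (hy k).trans ?_
    have := mul_le_mul_of_nonneg_right h (hχ0 k)
    simp only []
    linarith
  have hA0 : A 0 = polyhedron w d := by simp [hA]
  have hA_compact : ∀ ε, IsCompact (A ε) := fun ε => poly_isCompact w hspan _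
  have hAfin : ∀ ε, μ (A ε) ≠ ⊤ := fun ε => (hA_compact ε).measure_lt_top.ne
  have hPj_compact : ∀ j, IsCompact (polyhedron w (dseq j)) := fun j => poly_isCompact w hspan _
  have hPjfin : ∀ j, μ (polyhedron w (dseq j)) ≠ ⊤ := fun j => (hPj_compact j).measure_lt_top.ne
  -- intersection identity
  have hInter : ⋂ i : ℕ, A (1 / (i + 1)) = A 0 := by
    apply Set.Subset.antisymm
    · intro y hy k
      simp only [Set.mem_iInter] at hy
      by_cases hwk : w k = 0
      · simp only [hwk, inner_zero_left]
        have := (h0 k hwk).1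
        simp [hχ, hwk]; linarith
      · have : ∀ ε : ℝ, 0 < ε → ⟪w k, y⟫ ≤ d k + ε := by
          intro ε hε
          obtain ⟨i, hi⟩ := exists_nat_one_div_lt hε
          have := hy i k
          simp only [hχ, hwk, if_false, mul_one] at this
          exact this.trans (by linarith)
        have : ⟪w k, y⟫ ≤ d k := le_of_forall_pos_le_add this
        simpa [hχ, hwk] using this
    · intro y hy
      exact Set.mem_iInter.2 fun i => hA_mono (show (0:ℝ) ≤ 1 / (i + 1) by positivity) hy
  -- union identity
  have hUnionSub : (⋃ i : ℕ, A (-(1 / (i + 1)))) ⊆ A 0 :=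
    Set.iUnion_subset fun i => hA_mono (neg_nonpos.mpr (by positivity))
  have hUnionMeas : μ (⋃ i : ℕ, A (-(1 / (i + 1)))) = μ (A 0) := by
    refine le_antisymm (measure_mono hUnionSub) ?_
    set Z : Set (EuclideanSpace ℝ (Fin N)) :=
      ⋃ k : Fin mm, {y | ⟪w k, y⟫ = d k ∧ w k ≠ 0} with hZ
    have hZnull : μ Z = 0 := by
      refine measure_iUnion_null fun k => ?_
      by_cases hwk : w k = 0
      · convert measure_empty (μ := μ)
        ext y; simp [hwk]
      · refine measure_mono_null (fun y hy => hy.1) (hyperplane_null μ hwk (d k))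
    have hcover : A 0 ⊆ (⋃ i : ℕ, A (-(1 / (i + 1)))) ∪ Z := by
      intro y hy
      by_cases hyU : y ∈ ⋃ i : ℕ, A (-(1 / (i + 1)))
      · exact Or.inl hyU
      right
      simp only [Set.mem_iUnion, not_exists] at hyU
      by_contra hyZ
      simp only [hZ, Set.mem_iUnion, not_exists, Set.mem_setOf_eq, not_and] at hyZ
      -- each nonzero constraint is strict
      have hstrict : ∀ k, w k ≠ 0 → ⟪w k, y⟫ < d k := by
        intro k hwk
        have hle := hy k
        simp only [hχ, hwk, if_false, mul_one, zero_mul, mul_zero] at hle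
        have := hyZ k
        rcases lt_or_eq_of_le (by simpa using hle) with h | h
        · exact h
        · exact absurd h (fun hh => (this hh) hwk)
      -- eventually y ∈ A (-(1/(i+1)))
      have hev : ∀ k : Fin mm, ∀ᶠ i : ℕ in atTop, ⟪w k, y⟫ ≤ d k + -(1 / (i + 1 : ℝ)) * χ k := by
        intro k
        by_cases hwk : w k = 0
        · refine Eventually.of_forall fun i => ?_
          simp [hχ, hwk, inner_zero_left, (h0 k hwk).1]
        · have hlt := hstrict k hwk
          have : ∀ᶠ i : ℕ in atTop, (1 : ℝ) / (i + 1) < d k - ⟪w k, y⟫ := by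
            have := tendsto_one_div_add_atTop_nhds_zero_nat (𝕜 := ℝ)
            exact this.eventually_lt_const (by linarith)
          filter_upwards [this] with i hi
          simp only [hχ, hwk, if_false, mul_one]
          linarith
      have : ∀ᶠ i : ℕ in atTop, ∀ k, ⟪w k, y⟫ ≤ d k + -(1 / (i + 1 : ℝ)) * χ k :=
        eventually_all.mpr hev
      obtain ⟨i, hi⟩ := this.exists
      exact hyU i hi
    calc μ (A 0) ≤ μ ((⋃ i : ℕ, A (-(1 / (i + 1)))) ∪ Z) := measure_mono hcover
      _ ≤ μ (⋃ i : ℕ, A (-(1 / (i + 1)))) + μ Z := measure_union_le _ _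
      _ = μ (⋃ i : ℕ, A (-(1 / (i + 1)))) := by rw [hZnull, add_zero]
  -- monotone limits
  have hup : Tendsto (fun i : ℕ => μ (A (1 / (i + 1)))) atTop (𝓝 (μ (A 0))) := by
    rw [← hInter]
    exact tendsto_measure_iInter_atTop
      (fun i => ((poly_isClosed w _).measurableSet).nullMeasurableSet)
      (fun i j hij => hA_mono (by
        have : (1 : ℝ) / (j + 1) ≤ 1 / (i + 1) := by
          apply one_div_le_one_div_of_le (by positivity)
          exact_mod_cast by omega
        exact this))
      ⟨0, hAfin _⟩
  have hlo : Tendsto (fun i : ℕ => μ (A (-(1 / (i + 1))))) atTop (𝓝 (μ (A 0))) := by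
    rw [← hUnionMeas]
    exact tendsto_measure_iUnion_atTop
      (fun i j hij => hA_mono (by
        have : (1 : ℝ) / (j + 1) ≤ 1 / (i + 1) := by
          apply one_div_le_one_div_of_le (by positivity)
          exact_mod_cast by omega
        linarith))
  have hupR : Tendsto (fun i : ℕ => (μ (A (1 / (i + 1)))).toReal) atTop
      (𝓝 ((μ (A 0)).toReal)) := (ENNReal.tendsto_toReal (hAfin 0)).comp hup
  have hloR : Tendsto (fun i : ℕ => (μ (A (-(1 / (i + 1))))).toReal) atTop
      (𝓝 ((μ (A 0)).toReal)) := (ENNReal.tendsto_toReal (hAfin 0)).comp hlo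
  -- squeeze
  rw [Metric.tendsto_atTop]
  intro δ hδ
  obtain ⟨i1, hi1⟩ := Metric.tendsto_atTop.1 hupR (δ / 2) (by linarith)
  obtain ⟨i2, hi2⟩ := Metric.tendsto_atTop.1 hloR (δ / 2) (by linarith)
  set i := max i1 i2 with hi
  set ε : ℝ := 1 / (i + 1) with hε
  have hεpos : 0 < ε := by positivity
  obtain ⟨Nj, hNj⟩ := Metric.tendsto_atTop.1 hd ε hεpos
  refine ⟨Nj, fun j hj => ?_⟩
  have hclose : ∀ k, |dseq j k - d k| < ε := by
    intro k
    have := (dist_le_pi_dist (dseq j) d k).trans_lt (hNj j hj)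
    rwa [Real.dist_eq] at this
  have hsub1 : A (-ε) ⊆ polyhedron w (dseq j) := by
    intro y hy k
    by_cases hwk : w k = 0
    · simp only [hwk, inner_zero_left]
      exact (h0 k hwk).2 j
    · have := hy k
      simp only [hχ, hwk, if_false, mul_one] at this
      have h2 := hclose k
      rw [abs_lt] at h2
      linarith
  have hsub2 : polyhedron w (dseq j) ⊆ A ε := by
    intro y hy k
    by_cases hwk : w k = 0
    · simp only [hχ, hwk, if_true, mul_zero, add_zero]
      simp only [hwk, inner_zero_left]
      exact (h0 k hwk).1
    · have := hy k
      have h2 := hclose k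
      rw [abs_lt] at h2
      simp only [hχ, hwk, if_false, mul_one]
      linarith
  have hm1 : (μ (A (-ε))).toReal ≤ (μ (polyhedron w (dseq j))).toReal :=
    ENNReal.toReal_mono (hPjfin j) (measure_mono hsub1)
  have hm2 : (μ (polyhedron w (dseq j))).toReal ≤ (μ (A ε)).toReal :=
    ENNReal.toReal_mono (hAfin ε) (measure_mono hsub2)
  have hd1 : dist ((μ (A ε)).toReal) ((μ (A 0)).toReal) < δ / 2 := hi1 i (le_max_left _ _)
  have hd2 : dist ((μ (A (-ε))).toReal) ((μ (A 0)).toReal) < δ / 2 := hi2 i (le_max_right _ _)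
  rw [Real.dist_eq, abs_lt] at hd1 hd2 ⊢
  rw [hA0] at hd1 hd2
  constructor <;> [nlinarith [hm1, hd2.1]; nlinarith [hm2, hd1.2]]

end Core2

section Facet

variable {n m : ℕ}

theorem facet_reduction (hn : 0 < n) (U : Fin m → EuclideanSpace ℝ (Fin n))
    (hunit : ∀ i, ‖U i‖ = 1) (hinj : Function.Injective U) (hpos : PosSpanning U) (i : Fin m) :
    ∃ w : Fin m → EuclideanSpace ℝ (Fin (n - 1)),
      PosSpanning w ∧
      (∀ k, w k = 0 → ∀ c : Fin m → ℝ, (∀ l, 0 ≤ c l) → 0 ≤ c k - c i * ⟪U k, U i⟫) ∧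
      (∀ c : Fin m → ℝ,
        μH[(n : ℝ) - 1] (polyhedron U c ∩ {x | ⟪U i, x⟫ = c i}) =
          μH[(n : ℝ) - 1] (polyhedron w (fun k => c k - c i * ⟪U k, U i⟫))) := by
  classical
  have hUi0 : U i ≠ 0 := by
    intro h
    have := hunit i
    rw [h, norm_zero] at this
    norm_num at this
  haveI : Fact (Module.finrank ℝ (EuclideanSpace ℝ (Fin n)) = (n - 1) + 1) :=
    ⟨by rw [finrank_euclideanSpace_fin]; omega⟩
  set ob := OrthonormalBasis.fromOrthogonalSpanSingleton (𝕜 := ℝ) (n - 1) hUi0 with hob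
  set Liso : EuclideanSpace ℝ (Fin (n - 1)) ≃ₗᵢ[ℝ] (Submodule.span ℝ {U i})ᗮ :=
    ob.repr.symm with hLiso
  set L : EuclideanSpace ℝ (Fin (n - 1)) →ₗᵢ[ℝ] EuclideanSpace ℝ (Fin n) :=
    (Submodule.subtypeₗᵢ _).comp Liso.toLinearIsometry with hL
  have hLval : ∀ y, L y = ((Liso y : (Submodule.span ℝ {U i})ᗮ) : EuclideanSpace ℝ (Fin n)) :=
    fun y => rfl
  have hLmem : ∀ y, L y ∈ (Submodule.span ℝ {U i})ᗮ := fun y => by rw [hLval]; exact (Liso y).2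
  have hLi : ∀ y, ⟪U i, L y⟫ = 0 := fun y =>
    Submodule.mem_orthogonal_singleton_iff_inner_right.mp (hLmem y)
  have hLsurj : ∀ x : EuclideanSpace ℝ (Fin n), ⟪U i, x⟫ = 0 → ∃ y, L y = x := by
    intro x hx
    refine ⟨Liso.symm ⟨x, Submodule.mem_orthogonal_singleton_iff_inner_right.mpr hx⟩, ?_⟩
    rw [hLval, Liso.apply_symm_apply]
  set B := LinearMap.adjoint (L.toLinearMap) with hB
  set w : Fin m → EuclideanSpace ℝ (Fin (n - 1)) := fun k => B (U k) with hw
  have hwinner : ∀ (z : EuclideanSpace ℝ (Fin n)) (y : EuclideanSpace ℝ (Fin (n - 1))),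
      ⟪B z, y⟫ = ⟪z, L y⟫ := fun z y => LinearMap.adjoint_inner_left L.toLinearMap y z
  have hBL : ∀ x, B (L x) = x := by
    intro x
    apply ext_inner_right ℝ
    intro v
    rw [hwinner (L x) v]
    exact L.inner_map_map x v
  refine ⟨w, ?_, ?_, ?_⟩
  · -- PosSpanning w
    intro x
    obtain ⟨c, hc, hx⟩ := hpos (L x)
    refine ⟨c, hc, ?_⟩
    have : B (L x) = B (∑ k, c k • U k) := by rw [← hx]
    rw [hBL] at this
    rw [this, map_sum]
    exact Finset.sum_congr rfl fun k _ => by rw [_root_.map_smul]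
  · -- zero rows
    intro k hk c hc
    have hUkL : ∀ y, ⟪U k, L y⟫ = 0 := fun y => by
      have h2 := hwinner (U k) y
      rw [show B (U k) = w k from rfl, hk, inner_zero_left] at h2
      exact h2.symm
    have hmem : U k ∈ (Submodule.span ℝ {U i})ᗮᗮ := by
      intro v hv
      obtain ⟨y, hy⟩ := hLsurj v (Submodule.mem_orthogonal_singleton_iff_inner_right.mp hv)
      rw [← hy, real_inner_comm]
      exact hUkL y
    rw [Submodule.orthogonal_orthogonal] at hmem
    obtain ⟨a, ha⟩ := Submodule.mem_span_singleton.mp hmem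
    have hna : a = 1 ∨ a = -1 := by
      have h1 := hunit k
      rw [← ha, norm_smul, hunit i, mul_one, Real.norm_eq_abs] at h1
      exact (abs_eq zero_le_one).mp h1
    rcases hna with h1 | h1
    · have hki : U k = U i := by rw [← ha, h1, one_smul]
      have hkieq : k = i := hinj hki
      have hin : ⟪U k, U i⟫ = 1 := by
        rw [hki, real_inner_self_eq_norm_sq, hunit i]; norm_num
      rw [hin, hkieq]
      ring_nf
      exact le_refl 0
    · have hki : ⟪U k, U i⟫ = -1 := by
        rw [← ha, h1, real_inner_smul_left, real_inner_self_eq_norm_sq, hunit i]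
        norm_num
      rw [hki]
      have := hc k; have := hc i
      nlinarith
  · -- measure identity
    intro c
    have hiU : ⟪U i, U i⟫ = (1 : ℝ) := by
      rw [real_inner_self_eq_norm_sq, hunit i]; norm_num
    have himg : polyhedron U c ∩ {x | ⟪U i, x⟫ = c i} =
        (fun y => L y + c i • U i) '' polyhedron w (fun k => c k - c i * ⟪U k, U i⟫) := by
      ext x
      constructor
      · rintro ⟨hx1, hx2⟩
        simp only [Set.mem_setOf_eq] at hx2
        obtain ⟨y, hy⟩ := hLsurj (x - c i • U i) (by
          rw [inner_sub_right, real_inner_smul_right, hiU, hx2]; ring)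
        refine ⟨y, fun k => ?_, ?_⟩
        · show ⟪w k, y⟫ ≤ _
          rw [hw]
          show ⟪B (U k), y⟫ ≤ _
          rw [hwinner (U k) y, hy, inner_sub_right, real_inner_smul_right]
          have := hx1 k
          show _ ≤ c k - c i * ⟪U k, U i⟫
          linarith
        · show L y + c i • U i = x
          rw [hy]; abel
      · rintro ⟨y, hy, rfl⟩
        constructor
        · intro k
          have h1 : ⟪w k, y⟫ ≤ c k - c i * ⟪U k, U i⟫ := hy k
          show ⟪U k, L y + c i • U i⟫ ≤ c k
          have h2 : ⟪w k, y⟫ = ⟪U k, L y⟫ := hwinner (U k) y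
          rw [inner_add_right, real_inner_smul_right]
          rw [h2] at h1
          linarith
        · show ⟪U i, L y + c i • U i⟫ = c i
          rw [inner_add_right, hLi y, real_inner_smul_right, hiU]
          ring
    rw [himg]
    have hT : Isometry (fun y : EuclideanSpace ℝ (Fin (n - 1)) => L y + c i • U i) :=
      (IsometryEquiv.addRight (c i • U i)).isometry.comp L.isometry
    exact hT.hausdorffMeasure_image
      (Or.inl (by
        have : (1 : ℝ) ≤ n := by exact_mod_cast hn
        linarith)) _

end Facet

/-- continuity of cone-volume vectors: if `b⁽ʲ⁾ → b` in `ℝ^m_{≥0}` and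
`vol(P(U,b)) > 0`, then `γ(U, b⁽ʲ⁾) → γ(U, b)`. -/
theorem stmt_13 (n m : ℕ) (hn : 0 < n) (U : Fin m → EuclideanSpace ℝ (Fin n))
    (hunit : ∀ i, ‖U i‖ = 1) (hinj : Function.Injective U) (hpos : PosSpanning U)
    (bseq : ℕ → Fin m → ℝ) (b : Fin m → ℝ)
    (hseq : ∀ j i, 0 ≤ bseq j i) (hbnn : ∀ i, 0 ≤ b i)
    (htend : Tendsto bseq atTop (𝓝 b))
    (hvol : 0 < volume (polyhedron U b)) :
    Tendsto (fun j => coneVol U (bseq j)) atTop (𝓝 (coneVol U b)) := by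
  rw [tendsto_pi_nhds]
  intro i
  obtain ⟨w, hspan', hzero, hmeas⟩ := facet_reduction hn U hunit hinj hpos i
  haveI : (μH[(n : ℝ) - 1] : Measure (EuclideanSpace ℝ (Fin (n - 1)))).IsAddHaarMeasure := by
    have h1 : ((n : ℝ) - 1) = ((n - 1 : ℕ) : ℝ) := by
      rw [Nat.cast_sub hn]; norm_num
    rw [h1]
    have h2 := MeasureTheory.isAddHaarMeasure_hausdorffMeasure
      (E := EuclideanSpace ℝ (Fin (n - 1)))
    rwa [finrank_euclideanSpace_fin] at h2
  set d : Fin m → ℝ := fun k => b k - b i * ⟪U k, U i⟫ with hd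
  set dseq : ℕ → Fin m → ℝ := fun j k => bseq j k - bseq j i * ⟪U k, U i⟫ with hdseq
  have hdt : Tendsto dseq atTop (𝓝 d) := by
    rw [tendsto_pi_nhds]
    intro k
    exact ((tendsto_pi_nhds.1 htend k).sub
      (((tendsto_pi_nhds.1 htend i)).mul tendsto_const_nhds))
  have h0 : ∀ k, w k = 0 → 0 ≤ d k ∧ ∀ j, 0 ≤ dseq j k := fun k hk =>
    ⟨hzero k hk b hbnn, fun j => hzero k hk (bseq j) (hseq j)⟩
  have key := core_tendsto (μH[(n : ℝ) - 1]) w hspan' dseq d hdt h0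
  have hconv : Tendsto (fun j => bseq j i / (n : ℝ)) atTop (𝓝 (b i / n)) :=
    (tendsto_pi_nhds.1 htend i).div_const _
  have final := hconv.mul key
  have e1 : ∀ j, coneVol U (bseq j) i =
      bseq j i / n * ((μH[(n : ℝ) - 1] (polyhedron w (dseq j))).toReal) := fun j => by
    rw [coneVol, hmeas (bseq j)]
  have e2 : coneVol U b i =
      b i / n * ((μH[(n : ℝ) - 1] (polyhedron w d)).toReal) := by
    rw [coneVol, hmeas b]
  rw [e2]
  exact Tendsto.congr (fun j => (e1 j).symm) final
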